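/- For every tree T with at least 2 vertices, the matching number satisfies φ(T) ≤ (D₂(T) + S(T))/2, where D₂(T) is the number of vertices of degree at least 2 and S(T) is the number of support vertices. -/

import Mathlib

open SimpleGraph Finset

/-- For every tree `T` with at least 2 vertices, `φ(T) ≤ (D₂(T) + S(T))/2`. -/
theorem stmt9 {V : Type*} [Fintype V] [DecidableEq V] (G : SimpleGraph V)
    [DecidableRel G.Adj] (hT : G.IsTree) (hn : 2 ≤ Fintype.card V)
    (M : G.Subgraph) (hM : M.IsMatching) :
    2 * M.edgeSet.ncard ≤ (univ.filter (fun v => 2 ≤ G.degree v)).card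
      + (univ.filter (fun v => ∃ u, G.Adj v u ∧ G.degree u = 1)).card := by
  classical
  set Vs : Finset V := M.verts.toFinset with hVs
  -- every matched vertex has positive degree in G
  have hpos : ∀ v ∈ M.verts, 0 < G.degree v := by
    intro v hv
    obtain ⟨w, hw, -⟩ := hM hv
    rw [G.degree_pos_iff_exists_adj]
    exact ⟨w, M.adj_sub hw⟩
  -- 2 * number of edges = number of matched vertices
  have hcard : 2 * M.edgeSet.ncard = Vs.card := by
    have hdeg : ∀ (v : M.verts) (inst : Fintype (M.coe.neighborSet v)),
        @SimpleGraph.degree _ M.coe v inst = 1 := by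
      intro v inst
      obtain ⟨w, hw, hu⟩ := hM v.2
      rw [SimpleGraph.degree, Finset.card_eq_one]
      refine ⟨⟨w, M.edge_vert hw.symm⟩, ?_⟩
      ext y
      simp only [SimpleGraph.mem_neighborFinset, Finset.mem_singleton,
        SimpleGraph.Subgraph.coe_adj]
      constructor
      · intro h; exact Subtype.ext (hu y h)
      · rintro rfl; exact hw
    have h1 : Fintype.card M.verts = 2 * M.coe.edgeFinset.card := by
      have h := M.coe.sum_degrees_eq_twice_card_edges
      rw [← h, ← Finset.card_univ, Finset.card_eq_sum_ones]
      exact Finset.sum_congr rfl fun v _ => (hdeg v _).symm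
    have h2 : M.coe.edgeFinset.card = M.edgeSet.ncard := by
      rw [SimpleGraph.edgeFinset_card, ← Nat.card_eq_fintype_card, Nat.card_coe_set_eq,
        ← M.image_coe_edgeSet_coe,
        Set.ncard_image_of_injective _ (Sym2.map.injective Subtype.coe_injective)]
    rw [← h2, ← h1, hVs, Set.toFinset_card]
  rw [hcard]
  have hsplit := Finset.card_filter_add_card_filter_not
    (s := Vs) (p := fun v => G.degree v = 1)
  -- matched non-leaves have degree ≥ 2
  have hO : (Vs.filter (fun v => ¬ G.degree v = 1)).card
      ≤ (univ.filter (fun v => 2 ≤ G.degree v)).card := by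
    apply Finset.card_le_card
    intro v hv
    simp only [Finset.mem_filter, hVs, Set.mem_toFinset] at hv
    simp only [Finset.mem_filter, Finset.mem_univ, true_and]
    have := hpos v hv.1
    omega
  -- matched leaves inject into support vertices
  have hL : (Vs.filter (fun v => G.degree v = 1)).card
      ≤ (univ.filter (fun v => ∃ u, G.Adj v u ∧ G.degree u = 1)).card := by
    apply Finset.card_le_card_of_injOn
      (fun v => if h : v ∈ M.verts then (hM h).choose else v)
    · intro v hv
      simp only [Finset.mem_coe, Finset.mem_filter, hVs, Set.mem_toFinset] at hv
      obtain ⟨hv1, hv2⟩ := hv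
      simp only [dif_pos hv1, Finset.mem_coe, Finset.mem_filter, Finset.mem_univ, true_and]
      exact ⟨v, (M.adj_sub (hM hv1).choose_spec.1).symm, hv2⟩
    · intro a ha b hb hab
      simp only [Finset.coe_filter, Set.mem_setOf_eq, hVs, Set.mem_toFinset] at ha hb
      simp only [dif_pos ha.1, dif_pos hb.1] at hab
      have hA := (hM ha.1).choose_spec.1
      have hB := (hM hb.1).choose_spec.1
      rw [hab] at hA
      have hw : (hM hb.1).choose ∈ M.verts := M.edge_vert hB.symm
      obtain ⟨w0, -, huniq⟩ := hM hw
      exact (huniq a hA.symm).trans (huniq b hB.symm).symm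
  omega
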